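/- Suppose that for some r > 0 and a family B of unit-dual vectors, at least (1 − 1/(2d)) · K of the block means X̄_k satisfy sup_{v ∈ B} |⟨X̄_k − μ, v⟩| ≤ r, where B satisfies sup_{v ∈ B} ⟨w, v⟩ = ‖w‖ for all w. Then any Tukey median μ̂ = argmin_η sup_{v ∈ B} Σ_{k=1}^K 1_{⟨X̄_k − η, v⟩ > 0} computed on the K block means satisfies ‖μ̂ − μ‖ ≤ r, provided the minimal attainable value of sup_{v ∈ B} Σ_k 1_{⟨X̄_k − η, v⟩ > 0} is strictly less than dK/(d+1). -/

import Mathlib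

set_option maxHeartbeats 1000000


/-- Deterministic Tukey median-of-means bound: if at least `(1 − 1/(2d))·K` of the block
means satisfy `sup_{v∈B} |⟨X̄_k − μ, v⟩| ≤ r`, where `sup_{v∈B} ⟨w,v⟩ = ‖w‖`, then any
Tukey median `μ̂` (minimizer over `η` of `sup_{v∈B} #{k : ⟨X̄_k − η, v⟩ > 0}`) whose
minimal depth value is strictly less than `dK/(d+1)` satisfies `‖μ̂ − μ‖ ≤ r`. -/
theorem stmt15 (d K : ℕ) (hd : 0 < d) (hK : 0 < K)
    (Xb : Fin K → EuclideanSpace ℝ (Fin d)) (μ : EuclideanSpace ℝ (Fin d))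
    (B : Set (EuclideanSpace ℝ (Fin d))) (r : ℝ) (hr : 0 < r)
    (hB : ∀ w : EuclideanSpace ℝ (Fin d), (⨆ v : B, (inner ℝ w (v : EuclideanSpace ℝ (Fin d)) : ℝ)) = ‖w‖)
    (hgood : (1 - 1 / (2 * (d : ℝ))) * K ≤
      (Nat.card {k : Fin K // ∀ v ∈ B, |(inner ℝ (Xb k - μ) v : ℝ)| ≤ r} : ℝ))
    (μh : EuclideanSpace ℝ (Fin d))
    (hmin : ∀ η : EuclideanSpace ℝ (Fin d),
      (⨆ v : B, (Nat.card {k : Fin K // 0 < (inner ℝ (Xb k - μh) (v : EuclideanSpace ℝ (Fin d)) : ℝ)} : ℝ)) ≤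
      (⨆ v : B, (Nat.card {k : Fin K // 0 < (inner ℝ (Xb k - η) (v : EuclideanSpace ℝ (Fin d)) : ℝ)} : ℝ)))
    (hdepth : (⨆ v : B, (Nat.card {k : Fin K // 0 < (inner ℝ (Xb k - μh) (v : EuclideanSpace ℝ (Fin d)) : ℝ)} : ℝ)) <
      (d : ℝ) * K / (d + 1)) :
    ‖μh - μ‖ ≤ r := by
  by_contra hcon
  push_neg at hcon
  have hnorm : r < ‖μ - μh‖ := by rwa [norm_sub_rev]
  have hsup : r < ⨆ v : B, (inner ℝ (μ - μh) (v : EuclideanSpace ℝ (Fin d)) : ℝ) := by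
    rw [hB]; exact hnorm
  have hex : ∃ v : B, r < (inner ℝ (μ - μh) (v : EuclideanSpace ℝ (Fin d)) : ℝ) := by
    by_contra hno
    push_neg at hno
    exact absurd (Real.iSup_le hno hr.le) (not_le.mpr hsup)
  obtain ⟨v, hv⟩ := hex
  -- every good block lies strictly on the positive side of v through μh
  have hmap : ∀ k : Fin K, (∀ w ∈ B, |(inner ℝ (Xb k - μ) w : ℝ)| ≤ r) →
      0 < (inner ℝ (Xb k - μh) (v : EuclideanSpace ℝ (Fin d)) : ℝ) := by
    intro k hk
    have h1 : |(inner ℝ (Xb k - μ) (v : EuclideanSpace ℝ (Fin d)) : ℝ)| ≤ r := hk v v.2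
    have hsplit : Xb k - μh = (Xb k - μ) + (μ - μh) := by abel
    have h2 : (inner ℝ (Xb k - μh) (v : EuclideanSpace ℝ (Fin d)) : ℝ)
        = (inner ℝ (Xb k - μ) (v : EuclideanSpace ℝ (Fin d)) : ℝ)
          + (inner ℝ (μ - μh) (v : EuclideanSpace ℝ (Fin d)) : ℝ) := by
      rw [hsplit, inner_add_left]
    have habs := abs_le.mp h1
    linarith [habs.1]
  -- card of good set ≤ card of positive set at v
  have hST : Nat.card {k : Fin K // ∀ w ∈ B, |(inner ℝ (Xb k - μ) w : ℝ)| ≤ r} ≤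
      Nat.card {k : Fin K // 0 < (inner ℝ (Xb k - μh) (v : EuclideanSpace ℝ (Fin d)) : ℝ)} := by
    exact Nat.card_le_card_of_injective
      (fun s : {k : Fin K // ∀ w ∈ B, |(inner ℝ (Xb k - μ) w : ℝ)| ≤ r} =>
        (⟨s.1, hmap s.1 s.2⟩ :
          {k : Fin K // 0 < (inner ℝ (Xb k - μh) (v : EuclideanSpace ℝ (Fin d)) : ℝ)}))
      (by intro a b hab; exact Subtype.ext (by simpa [Subtype.ext_iff] using hab))
  -- each count is bounded by K
  have hcardK : ∀ w : B, (Nat.card {k : Fin K // 0 <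
      (inner ℝ (Xb k - μh) (w : EuclideanSpace ℝ (Fin d)) : ℝ)} : ℝ) ≤ K := by
    intro w
    have := Nat.card_le_card_of_injective
      (Subtype.val : {k : Fin K // 0 <
        (inner ℝ (Xb k - μh) (w : EuclideanSpace ℝ (Fin d)) : ℝ)} → Fin K)
      Subtype.val_injective
    have h2 : Nat.card (Fin K) = K := by simp
    rw [h2] at this
    exact_mod_cast this
  have hbdd : BddAbove (Set.range fun w : B =>
      (Nat.card {k : Fin K // 0 <
        (inner ℝ (Xb k - μh) (w : EuclideanSpace ℝ (Fin d)) : ℝ)} : ℝ)) := by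
    refine ⟨K, ?_⟩
    rintro x ⟨w, rfl⟩
    exact hcardK w
  have hle : (Nat.card {k : Fin K // 0 <
      (inner ℝ (Xb k - μh) (v : EuclideanSpace ℝ (Fin d)) : ℝ)} : ℝ) ≤
      ⨆ w : B, (Nat.card {k : Fin K // 0 <
        (inner ℝ (Xb k - μh) (w : EuclideanSpace ℝ (Fin d)) : ℝ)} : ℝ) :=
    le_ciSup hbdd v
  have hchain : (1 - 1 / (2 * (d : ℝ))) * K < (d : ℝ) * K / (d + 1) := by
    have hST' : (Nat.card {k : Fin K // ∀ w ∈ B, |(inner ℝ (Xb k - μ) w : ℝ)| ≤ r} : ℝ) ≤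
        (Nat.card {k : Fin K // 0 <
          (inner ℝ (Xb k - μh) (v : EuclideanSpace ℝ (Fin d)) : ℝ)} : ℝ) := by
      exact_mod_cast hST
    linarith
  -- but (1 - 1/(2d))·K ≥ dK/(d+1), contradiction
  have hd1 : (1 : ℝ) ≤ d := by exact_mod_cast hd
  have hK0 : (0 : ℝ) ≤ K := by positivity
  have hfinal : (d : ℝ) * K / (d + 1) ≤ (1 - 1 / (2 * (d : ℝ))) * K := by
    have h2d : (0 : ℝ) < 2 * d := by linarith
    rw [div_le_iff₀ (by linarith : (0:ℝ) < (d:ℝ) + 1)]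
    have h1 : (1 - 1 / (2 * (d:ℝ))) = (2*(d:ℝ) - 1) / (2*d) := by
      field_simp
    rw [h1, div_mul_eq_mul_div, div_mul_eq_mul_div, le_div_iff₀ h2d]
    nlinarith [mul_nonneg hK0 (sub_nonneg.mpr hd1)]
  linarith
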